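/- Let Y ∈ ℚ⟦X⟧ be the formal power series Y := (1/3)·(1 − ∑_{n≥0} (2/(3n−1))·C(3n, n)·Xⁿ) (so the n = 0 term is −2 and Y has constant coefficient 1). Then Y satisfies the cubic equation X − Y² + Y³ = 0 in ℚ⟦X⟧. -/

import Mathlib

open PowerSeries Nat

local notation "d" => PowerSeries.derivative ℚ

lemma FigEight.mem_span_X_pow {f : ℚ⟦X⟧} {n : ℕ} :
    f ∈ Ideal.span {(X : ℚ⟦X⟧)} ^ n ↔ ∀ m < n, coeff m f = 0 := by
  rw [Ideal.span_singleton_pow, Ideal.mem_span_singleton, X_pow_dvd_iff]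

instance : IsAdicComplete (Ideal.span {(X : ℚ⟦X⟧)}) ℚ⟦X⟧ where
  haus' := by
    intro x hx
    ext m
    have := hx (m+1)
    rw [SModEq.sub_mem, smul_eq_mul, Ideal.mul_top, sub_zero, FigEight.mem_span_X_pow] at this
    simpa using this m (by omega)
  prec' := by
    intro f hf
    refine ⟨PowerSeries.mk (fun n => coeff n (f (n+1))), fun {n} => ?_⟩
    rw [SModEq.sub_mem, smul_eq_mul, Ideal.mul_top, FigEight.mem_span_X_pow]
    intro m hm
    have h := hf (show m+1 ≤ n by omega)
    rw [SModEq.sub_mem, smul_eq_mul, Ideal.mul_top, FigEight.mem_span_X_pow] at h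
    have := h m (by omega)
    simp only [map_sub] at this ⊢
    simp [sub_eq_zero] at this ⊢
    rw [this]

lemma FigEight.exists_root :
    ∃ Z : ℚ⟦X⟧, PowerSeries.X - Z^2 + Z^3 = 0 ∧ constantCoeff Z = 1 := by
  have H : HenselianRing ℚ⟦X⟧ (Ideal.span {(X : ℚ⟦X⟧)}) := inferInstance
  have h1 : (Polynomial.X ^ 3 - Polynomial.X ^ 2 + Polynomial.C (PowerSeries.X)).eval
      (1 : ℚ⟦X⟧) ∈ Ideal.span {(X : ℚ⟦X⟧)} := by
    have : (Polynomial.X ^ 3 - Polynomial.X ^ 2 + Polynomial.C (PowerSeries.X)).eval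
        (1 : ℚ⟦X⟧) = (X : ℚ⟦X⟧) := by simp
    rw [this]; exact Ideal.mem_span_singleton_self (X : ℚ⟦X⟧)
  have h2 : IsUnit (Ideal.Quotient.mk (Ideal.span {(X : ℚ⟦X⟧)})
      ((Polynomial.derivative (Polynomial.X ^ 3 - Polynomial.X ^ 2
        + Polynomial.C (PowerSeries.X))).eval (1 : ℚ⟦X⟧))) := by
    have : (Polynomial.derivative (Polynomial.X ^ 3 - Polynomial.X ^ 2
        + Polynomial.C (PowerSeries.X))).eval (1 : ℚ⟦X⟧) = 1 := by
      simp; norm_num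
    rw [this, map_one]; exact isUnit_one
  obtain ⟨Z, hroot, hZ1⟩ := H.is_henselian
    (Polynomial.X ^ 3 - Polynomial.X ^ 2 + Polynomial.C (PowerSeries.X))
    (by monicity!) (1 : ℚ⟦X⟧) h1 h2
  refine ⟨Z, ?_, ?_⟩
  · have := hroot
    simp [Polynomial.IsRoot, Polynomial.eval_add, Polynomial.eval_sub] at this
    linear_combination this
  · rw [Ideal.mem_span_singleton, PowerSeries.X_dvd_iff, map_sub, map_one, sub_eq_zero] at hZ1
    exact hZ1

lemma FigEight.dnum (n : ℕ) [n.AtLeastTwo] : (d) (OfNat.ofNat n : ℚ⟦X⟧) = 0 := by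
  rw [show (OfNat.ofNat n : ℚ⟦X⟧) = ((n:ℕ) : ℚ⟦X⟧) by norm_cast]
  exact Derivation.map_natCast _ _

lemma FigEight.ode_of_root (Z : ℚ⟦X⟧) (hc : X - Z^2 + Z^3 = 0) (h0 : constantCoeff Z = 1) :
    (27*X^2 - 4*X) * (d) ((d) Z) + (27*X - 2) * ((d) Z) - 3*Z = -1 := by
  have hUne : (2*Z - 3*Z^2) ≠ 0 := by
    intro h
    have := congrArg (constantCoeff) h
    rw [map_sub, map_mul, map_mul, map_pow, h0] at this
    norm_num [map_ofNat] at this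
  have hU : (2*Z - 3*Z^2) * (d) Z = 1 := by
    have hd := congrArg (d) hc
    simp only [map_add, map_sub, PowerSeries.derivative_X, Derivation.leibniz_pow, map_zero,
      smul_eq_mul, nsmul_eq_mul] at hd
    push_cast at hd
    linear_combination -hd
  have key1 : (2*Z - 3*Z^2) * (-3*X + (9*X-2)*Z + 2*Z^2) = 27*X^2 - 4*X := by
    linear_combination (-6*Z + 4 - 27*X) * hc
  have h1 : (27*X^2 - 4*X) * (d) Z = -3*X + (9*X-2)*Z + 2*Z^2 := by
    rw [← key1]
    linear_combination (-3*X + (9*X-2)*Z + 2*Z^2) * hU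
  have h2 : 2*Z*((d) Z) = 9*X*((d) Z) - 3*Z + 1 := by
    have h0' : (2*Z - 3*Z^2) * (2*Z*((d) Z) - (9*X*((d) Z) - 3*Z + 1)) = 0 := by
      linear_combination (2*Z - 9*X) * hU - 9*hc
    have := (mul_eq_zero.mp h0').resolve_left hUne
    linear_combination this
  have hd1 := congrArg (d) h1
  simp only [Derivation.leibniz, Derivation.leibniz_pow, map_add, map_sub, map_one,
    PowerSeries.derivative_X, FigEight.dnum 27, FigEight.dnum 4, FigEight.dnum 9,
    FigEight.dnum 2, FigEight.dnum 3, map_neg, smul_eq_mul, nsmul_eq_mul, mul_zero, zero_mul,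
    mul_one, add_zero, zero_add, sub_zero] at hd1
  push_cast at hd1
  linear_combination hd1 + 2*h2

lemma FigEight.coeff_ode (W : ℚ⟦X⟧) (m : ℕ) :
    coeff m ((27*X^2 - 4*X) * (d) ((d) W) + (27*X - 2) * ((d) W) - 3*W)
    = -2*((m:ℚ)+1)*(2*m+1) * coeff (m+1) W + (27*(m:ℚ)^2 - 3) * coeff m W := by
  have e : (27*X^2 - 4*X) * (d) ((d) W) + (27*X - 2) * ((d) W) - 3*W
      = C (27:ℚ) * (X*(X*((d) ((d) W)))) - C (4:ℚ) * (X*((d) ((d) W)))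
        + C (27:ℚ) * (X * (d) W) - C (2:ℚ) * ((d) W) - C (3:ℚ) * W := by
    simp only [map_ofNat]; ring
  rw [e]
  rcases m with _|m
  · simp [coeff_zero_X_mul, PowerSeries.coeff_derivative, ← coeff_zero_eq_constantCoeff]
    ring
  · rcases m with _|m
    · simp [coeff_succ_X_mul, coeff_zero_X_mul, PowerSeries.coeff_derivative,
        ← coeff_zero_eq_constantCoeff]
      ring
    · simp [coeff_succ_X_mul, coeff_zero_X_mul, PowerSeries.coeff_derivative,
        ← coeff_zero_eq_constantCoeff]
      push_cast
      ring

lemma FigEight.ode_unique (E : ℚ⟦X⟧)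
    (hE : (27*X^2 - 4*X) * (d) ((d) E) + (27*X - 2) * ((d) E) - 3*E = 0)
    (h0 : coeff 0 E = 0) : E = 0 := by
  have key : ∀ m, coeff m E = 0 := by
    intro m
    induction m with
    | zero => exact h0
    | succ k ih =>
      have h := congrArg (coeff k) hE
      rw [FigEight.coeff_ode, ih, map_zero] at h
      have hpos : (0:ℚ) < 2*((k:ℚ)+1)*(2*(k:ℚ)+1) := by positivity
      have : -2*((k:ℚ)+1)*(2*(k:ℚ)+1) ≠ 0 := by nlinarith
      field_simp at h
      have h' : 2*((k:ℚ)+1)*(2*(k:ℚ)+1) * coeff (k+1) E = 0 := by linear_combination -h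
      exact (_root_.mul_eq_zero.mp h').resolve_left hpos.ne'
  ext n
  rw [key n, map_zero]

lemma FigEight.choose_rec (m : ℕ) : 2*((m:ℚ)+1)*(2*(m:ℚ)+1) * ((3*m+3).choose (m+1) : ℚ)
    = 3*(3*(m:ℚ)+1)*(3*(m:ℚ)+2) * ((3*m).choose m : ℚ) := by
  rw [Nat.cast_choose ℚ (by omega : m+1 ≤ 3*m+3), Nat.cast_choose ℚ (by omega : m ≤ 3*m)]
  have e1 : 3*m+3 - (m+1) = 2*m+2 := by omega
  have e2 : 3*m - m = 2*m := by omega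
  rw [e1, e2]
  have f1 : ((3*m+3)! : ℚ) = (3*(m:ℚ)+3)*(3*(m:ℚ)+2)*(3*(m:ℚ)+1)*((3*m)! : ℚ) := by
    rw [show 3*m+3 = (3*m+2)+1 by ring, Nat.factorial_succ,
        show 3*m+2 = (3*m+1)+1 by ring, Nat.factorial_succ,
        show 3*m+1 = (3*m)+1 by ring, Nat.factorial_succ]
    push_cast; ring
  have f2 : ((m+1)! : ℚ) = ((m:ℚ)+1)*(m ! : ℚ) := by
    rw [Nat.factorial_succ]; push_cast; ring
  have f3 : ((2*m+2)! : ℚ) = (2*(m:ℚ)+2)*(2*(m:ℚ)+1)*((2*m)! : ℚ) := by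
    rw [show 2*m+2 = (2*m+1)+1 by ring, Nat.factorial_succ,
        show 2*m+1 = (2*m)+1 by ring, Nat.factorial_succ]
    push_cast; ring
  rw [f1, f2, f3]
  have n1 : ((3*m)! : ℚ) ≠ 0 := Nat.cast_ne_zero.mpr (Nat.factorial_ne_zero _)
  have n2 : (m ! : ℚ) ≠ 0 := Nat.cast_ne_zero.mpr (Nat.factorial_ne_zero _)
  have n3 : ((2*m)! : ℚ) ≠ 0 := Nat.cast_ne_zero.mpr (Nat.factorial_ne_zero _)
  have n4 : ((m:ℚ)+1) ≠ 0 := by positivity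
  have n5 : (2*(m:ℚ)+1) ≠ 0 := by positivity
  have n6 : (2*(m:ℚ)+2) ≠ 0 := by positivity
  field_simp

lemma FigEight.coeff_Y (n : ℕ) :
    coeff n (PowerSeries.C (1 / 3 : ℚ) *
      (1 - PowerSeries.mk fun n => (2 / (3 * (n : ℚ) - 1)) * (Nat.choose (3 * n) n : ℚ)))
    = (1/3) * ((if n = 0 then (1:ℚ) else 0) - (2 / (3 * (n : ℚ) - 1)) * ((3*n).choose n : ℚ)) := by
  rw [coeff_C_mul, map_sub, PowerSeries.coeff_one, coeff_mk]

lemma FigEight.ode_Y :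
    (27*X^2 - 4*X) * (d) ((d) (PowerSeries.C (1 / 3 : ℚ) *
      (1 - PowerSeries.mk fun n => (2 / (3 * (n : ℚ) - 1)) * (Nat.choose (3 * n) n : ℚ))))
    + (27*X - 2) * ((d) (PowerSeries.C (1 / 3 : ℚ) *
      (1 - PowerSeries.mk fun n => (2 / (3 * (n : ℚ) - 1)) * (Nat.choose (3 * n) n : ℚ))))
    - 3*(PowerSeries.C (1 / 3 : ℚ) *
      (1 - PowerSeries.mk fun n => (2 / (3 * (n : ℚ) - 1)) * (Nat.choose (3 * n) n : ℚ))) = -1 := by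
  ext m
  rw [FigEight.coeff_ode, FigEight.coeff_Y, FigEight.coeff_Y]
  rcases m with _|m
  · norm_num
  · have key := FigEight.choose_rec (m+1)
    have c1 : (3*(m+1)+3 : ℕ) = 3*m+3+3 := by ring
    have c2 : (3*(m+1) : ℕ) = 3*m+3 := by ring
    rw [c1, c2] at key
    have c0 : (3*(m+1+1) : ℕ) = 3*m+3+3 := by ring
    rw [c0, c2]
    push_cast at key ⊢
    have d1 : 3*((m:ℚ)+1+1) - 1 = 3*(m:ℚ)+5 := by ring
    have d2 : 3*((m:ℚ)+1) - 1 = 3*(m:ℚ)+2 := by ring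
    rw [d1, d2, map_neg, PowerSeries.coeff_one]
    have n1 : (3*(m:ℚ)+2) ≠ 0 := by positivity
    have n2 : (3*(m:ℚ)+5) ≠ 0 := by positivity
    simp only [Nat.add_eq, if_neg (Nat.succ_ne_zero m)]
    field_simp
    linear_combination (2*(3*(m:ℚ)+2)) * key

theorem figure_eight_bottom_curve_solution (Y : PowerSeries ℚ)
    (hY : Y = PowerSeries.C (1 / 3 : ℚ) *
      (1 - PowerSeries.mk fun n =>
        (2 / (3 * (n : ℚ) - 1)) * (Nat.choose (3 * n) n : ℚ))) :
    PowerSeries.X - Y ^ 2 + Y ^ 3 = 0 := by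
  obtain ⟨Z, hcz, hz0⟩ := FigEight.exists_root
  have hodeZ := FigEight.ode_of_root Z hcz hz0
  have hodeY := FigEight.ode_Y
  rw [← hY] at hodeY
  have hY0 : coeff 0 Y = 1 := by
    rw [hY, FigEight.coeff_Y]; norm_num
  have hE : Y - Z = 0 := by
    apply FigEight.ode_unique
    · simp only [map_sub]
      linear_combination hodeY - hodeZ
    · rw [map_sub, hY0, coeff_zero_eq_constantCoeff, hz0]
      norm_num
  have : Y = Z := by linear_combination hE
  rw [this]
  exact hcz
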